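/- If m ≤ s - 2 and m ≤ b, then Breaker has a winning strategy for the (m,b)-game on any s-uniform hypergraph that is a disjoint collection of trees and unicycles. -/

import Mathlib

/-- A strategy maps the current position (Maker's claimed set, Breaker's claimed
set) to the set of vertices to be claimed next. -/
abbrev Strategy (V : Type*) := Finset V → Finset V → Finset V

/-- A strategy for a player claiming `k` vertices per turn is valid if each move
consists of unclaimed vertices and has cardinality `k` (or all the remaining
unclaimed vertices if fewer than `k` remain). -/
def ValidStrategy {V : Type*} [Fintype V] [DecidableEq V] (k : ℕ) (f : Strategy V) : Prop :=
  ∀ M B : Finset V, Disjoint (f M B) (M ∪ B) ∧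
    (f M B).card = min k (Fintype.card V - (M ∪ B).card)

/-- The position after `r` rounds of the game, Maker moving first in each round:
`(Maker's claimed set, Breaker's claimed set)`. -/
def play {V : Type*} [DecidableEq V] (ms bs : Strategy V) : ℕ → Finset V × Finset V
  | 0 => (∅, ∅)
  | r + 1 =>
    let q := play ms bs r
    let M' := q.1 ∪ ms q.1 q.2
    (M', q.2 ∪ bs M' q.2)

/-- Maker wins the `(m, b)`-game on the board `E`: Maker has a valid strategy such
that against every valid Breaker strategy, at the end of the game Maker's claimed
set contains an edge of `E`. -/
def MakerWins {V : Type*} [Fintype V] [DecidableEq V] (m b : ℕ)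
    (E : Finset (Finset V)) : Prop :=
  ∃ ms : Strategy V, ValidStrategy m ms ∧
    ∀ bs : Strategy V, ValidStrategy b bs →
      ∃ e ∈ E, e ⊆ (play ms bs (Fintype.card V)).1

/-- Breaker wins the `(m, b)`-game on the board `E`: Breaker has a valid strategy
such that against every valid Maker strategy, Maker's final claimed set contains
no edge of `E`. -/
def BreakerWins {V : Type*} [Fintype V] [DecidableEq V] (m b : ℕ)
    (E : Finset (Finset V)) : Prop :=
  ∃ bs : Strategy V, ValidStrategy b bs ∧
    ∀ ms : Strategy V, ValidStrategy m ms →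
      ∀ e ∈ E, ¬ e ⊆ (play ms bs (Fintype.card V)).1

/-- Two vertices lie in a common edge of `E`. -/
def SameEdge {α : Type*} (E : Finset (Finset α)) (x y : α) : Prop :=
  ∃ e ∈ E, x ∈ e ∧ y ∈ e

/-- `x` and `y` are connected by a chain of pairwise intersecting edges. -/
def Conn {α : Type*} (E : Finset (Finset α)) : α → α → Prop :=
  Relation.ReflTransGen (SameEdge E)

open scoped Classical in
/-- The connected component of `x` inside the vertex set `Vs`. -/
noncomputable def component {α : Type*} (Vs : Finset α) (E : Finset (Finset α))
    (x : α) : Finset α :=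
  Vs.filter fun y => Conn E x y

open scoped Classical in
/-- The edges belonging to the connected component of `x`. -/
noncomputable def compEdges {α : Type*} (Vs : Finset α) (E : Finset (Finset α))
    (x : α) : Finset (Finset α) :=
  E.filter fun e => e ⊆ component Vs E x

/-- The excess `ex(H) = (s-1)|E| - |V|` of an `s`-uniform hypergraph. -/
def excess {α : Type*} (s : ℕ) (Vs : Finset α) (E : Finset (Finset α)) : ℤ :=
  ((s : ℤ) - 1) * E.card - Vs.card
section Comb
variable {α : Type*} [Fintype α] [DecidableEq α]
set_option linter.unusedSectionVars false

lemma sameEdge_symm {E : Finset (Finset α)} : Symmetric (SameEdge E) := by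
  rintro x y ⟨e, he, hx, hy⟩; exact ⟨e, he, hy, hx⟩

lemma conn_symm {E : Finset (Finset α)} {x y : α} (h : Conn E x y) : Conn E y x :=
  haveI : Std.Symm (SameEdge E) := ⟨sameEdge_symm⟩
  Relation.ReflTransGen.stdSymm.symm _ _ h

lemma mem_component {E : Finset (Finset α)} {x y : α} :
    y ∈ component Finset.univ E x ↔ Conn E x y := by
  classical
  simp [component]

lemma mem_compEdges {E : Finset (Finset α)} {x : α} {e : Finset α} :
    e ∈ compEdges Finset.univ E x ↔ e ∈ E ∧ e ⊆ component Finset.univ E x := by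
  classical
  simp [compEdges]

lemma edge_mem_compEdges {E : Finset (Finset α)} {x z : α} {e : Finset α}
    (he : e ∈ E) (hxz : Conn E x z) (hz : z ∈ e) :
    e ∈ compEdges Finset.univ E x := by
  classical
  rw [mem_compEdges]
  refine ⟨he, fun w hw => ?_⟩
  rw [mem_component]
  exact hxz.trans (Relation.ReflTransGen.single ⟨e, he, hz, hw⟩)

lemma comp_biUnion {E : Finset (Finset α)} {x : α} {e₀ : Finset α}
    (he₀ : e₀ ∈ E) (hx : x ∈ e₀) :
    component Finset.univ E x = (compEdges Finset.univ E x).biUnion id := by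
  apply Finset.Subset.antisymm
  · intro y hy
    rw [mem_component] at hy
    rcases hy.cases_tail with h | ⟨c, hc, ⟨e, he, hce, hye⟩⟩
    · subst h
      exact Finset.mem_biUnion.2 ⟨e₀, edge_mem_compEdges he₀ Relation.ReflTransGen.refl hx, hx⟩
    · exact Finset.mem_biUnion.2 ⟨e, edge_mem_compEdges he hc hce, hye⟩
  · intro y hy
    rcases Finset.mem_biUnion.1 hy with ⟨e, he, hye⟩
    exact (mem_compEdges.1 he).2 hye

/-- crossing lemma -/
lemma crossing {E : Finset (Finset α)} {W : Finset α} {u v : α}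
    (h : Conn E u v) (hu : u ∈ W) (hv : v ∉ W) :
    ∃ e ∈ E, (e ∩ W).Nonempty ∧ ¬ e ⊆ W := by
  induction h with
  | refl => exact absurd hu hv
  | @tail p q hup hpq ih =>
    by_cases hp : p ∈ W
    · obtain ⟨e, he, hpe, hqe⟩ := hpq
      exact ⟨e, he, ⟨p, Finset.mem_inter.2 ⟨hpe, hp⟩⟩, fun hsub => hv (hsub hqe)⟩
    · exact ih hp

/-- Growing a nonempty subfamily of a component's edges to the whole family
does not decrease the excess. -/
lemma grow {E : Finset (Finset α)} {x : α} {s : ℕ} (hE : ∀ e ∈ E, e.card = s)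
    (hs : 0 < s) :
    ∀ (n : ℕ) (T : Finset (Finset α)), T ⊆ compEdges Finset.univ E x → T.Nonempty →
      (compEdges Finset.univ E x \ T).card = n →
      ((s : ℤ) - 1) * T.card - ((T.biUnion id).card : ℤ) ≤
        ((s : ℤ) - 1) * (compEdges Finset.univ E x).card -
          (((compEdges Finset.univ E x).biUnion id).card : ℤ) := by
  intro n
  induction n with
  | zero =>
    intro T hsub _ hcard
    have : T = compEdges Finset.univ E x :=
      Finset.Subset.antisymm hsub fun e he => by
        by_contra hne
        exact absurd (Finset.card_eq_zero.1 hcard ▸ Finset.mem_sdiff.2 ⟨he, hne⟩)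
          (Finset.notMem_empty e)
    rw [this]
  | succ n ih =>
    intro T hsub hne hcard
    set C := compEdges Finset.univ E x with hC
    have hCT : (C \ T).Nonempty := Finset.card_pos.1 (hcard ▸ n.succ_pos)
    obtain ⟨e₂, he₂⟩ := hCT
    obtain ⟨e₂C, e₂T⟩ := Finset.mem_sdiff.1 he₂
    set W := T.biUnion id with hW
    have hWsub : ∀ f ∈ T, f ⊆ W := fun f hf => fun z hz => Finset.mem_biUnion.2 ⟨f, hf, hz⟩
    have key : ∃ e, e ∈ C \ T ∧ (e ∩ W).Nonempty := by
      by_cases h2 : (e₂ ∩ W).Nonempty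
      · exact ⟨e₂, he₂, h2⟩
      · obtain ⟨e₁, he₁⟩ := hne
        have he₁C := hsub he₁
        obtain ⟨v₁, hv₁⟩ : e₁.Nonempty := by
          rw [← Finset.card_pos, hE e₁ (mem_compEdges.1 he₁C).1]; exact hs
        obtain ⟨v₂, hv₂⟩ : e₂.Nonempty := by
          rw [← Finset.card_pos, hE e₂ (mem_compEdges.1 e₂C).1]; exact hs
        have hv₁W : v₁ ∈ W := hWsub e₁ he₁ hv₁
        have hv₂W : v₂ ∉ W := fun h => h2 ⟨v₂, Finset.mem_inter.2 ⟨hv₂, h⟩⟩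
        have hconn : Conn E v₁ v₂ := by
          have h1 : Conn E x v₁ := mem_component.1 ((mem_compEdges.1 he₁C).2 hv₁)
          have h2' : Conn E x v₂ := mem_component.1 ((mem_compEdges.1 e₂C).2 hv₂)
          exact (conn_symm h1).trans h2'
        obtain ⟨e, he, heW, heW'⟩ := crossing hconn hv₁W hv₂W
        refine ⟨e, Finset.mem_sdiff.2 ⟨?_, fun heT => heW' (hWsub e heT)⟩, heW⟩
        obtain ⟨a, ha⟩ := heW
        obtain ⟨hae, haW⟩ := Finset.mem_inter.1 ha
        obtain ⟨f, hfT, haf⟩ := Finset.mem_biUnion.1 haW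
        have : Conn E x a := mem_component.1 ((mem_compEdges.1 (hsub hfT)).2 haf)
        exact edge_mem_compEdges he this hae
    obtain ⟨e, heCT, heW⟩ := key
    obtain ⟨heC, heT⟩ := Finset.mem_sdiff.1 heCT
    have step : ((s : ℤ) - 1) * T.card - ((T.biUnion id).card : ℤ) ≤
        ((s : ℤ) - 1) * (insert e T).card - (((insert e T).biUnion id).card : ℤ) := by
      rw [Finset.card_insert_of_notMem heT]
      have hbi : (insert e T).biUnion id = e ∪ W := Finset.biUnion_insert
      rw [hbi]
      have h1 : (e \ W).card + W.card = (e ∪ W).card := Finset.card_sdiff_add_card e W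
      have h2 : (e ∩ W).card + (e \ W).card = e.card := Finset.card_inter_add_card_sdiff e W
      have h3 : 1 ≤ (e ∩ W).card := Finset.card_pos.2 heW
      have h4 : e.card = s := hE e (mem_compEdges.1 heC).1
      have h5 : (e ∪ W).card ≤ W.card + (s - 1) := by omega
      have h6 : 1 ≤ s := hs
      push_cast
      have h5' : ((e ∪ W).card : ℤ) ≤ (W.card : ℤ) + ((s : ℤ) - 1) := by
        have : ((e ∪ W).card : ℤ) ≤ ((W.card + (s-1) : ℕ) : ℤ) := Nat.cast_le.2 h5
        push_cast at this
        omega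
      linarith
    refine le_trans step (ih (insert e T) (Finset.insert_subset heC hsub)
      ⟨e, Finset.mem_insert_self e T⟩ ?_)
    have hdiff : C \ insert e T = (C \ T).erase e := by
      ext g
      simp only [Finset.mem_erase, Finset.mem_sdiff, Finset.mem_insert]
      tauto
    rw [hdiff, Finset.card_erase_of_mem heCT, hcard]
    omega

end Comb
section Comb2
variable {α : Type*} [Fintype α] [DecidableEq α]
set_option linter.unusedSectionVars false

lemma union_lower {E : Finset (Finset α)} {s : ℕ} (hE : ∀ e ∈ E, e.card = s) (hs : 0 < s)
    (hcomp : ∀ x : α,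
      excess s (component Finset.univ E x) (compEdges Finset.univ E x) ≤ 0) :
    ∀ S : Finset (Finset α), S ⊆ E → ((s : ℤ) - 1) * S.card ≤ ((S.biUnion id).card : ℤ) := by
  classical
  intro S
  induction S using Finset.strongInduction with
  | _ S ih =>
    intro hSE
    rcases S.eq_empty_or_nonempty with rfl | ⟨e₀, he₀⟩
    · simp
    · obtain ⟨x, hx⟩ : e₀.Nonempty := by
        rw [← Finset.card_pos, hE e₀ (hSE he₀)]; exact hs
      set C := compEdges Finset.univ E x with hC
      set T := S.filter (fun e => e ∈ C) with hT
      have hTC : T ⊆ C := fun e he => (Finset.mem_filter.1 he).2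
      have he₀C : e₀ ∈ C := edge_mem_compEdges (hSE he₀) Relation.ReflTransGen.refl hx
      have hTne : T.Nonempty := ⟨e₀, Finset.mem_filter.2 ⟨he₀, he₀C⟩⟩
      have hTS : T ⊆ S := Finset.filter_subset _ _
      -- excess of the component is ≤ 0, and its vertex set is the union of its edges
      have hcompx := hcomp x
      rw [excess, comp_biUnion (hSE he₀) hx] at hcompx
      have hgrow := grow hE hs (C \ T).card T hTC hTne rfl
      have hTbound : ((s : ℤ) - 1) * T.card ≤ ((T.biUnion id).card : ℤ) := by
        rw [← hC] at hcompx
        linarith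
      set S' := S \ T with hS'
      have hS'ss : S' ⊂ S := Finset.sdiff_ssubset hTS hTne
      have hS'bound := ih S' hS'ss (fun e he => hSE (Finset.mem_sdiff.1 he).1)
      -- the unions are disjoint
      have hdisj : Disjoint (T.biUnion id) (S'.biUnion id) := by
        rw [Finset.disjoint_left]
        intro z hzT hzS'
        obtain ⟨f, hfT, hzf⟩ := Finset.mem_biUnion.1 hzT
        obtain ⟨g, hgS', hzg⟩ := Finset.mem_biUnion.1 hzS'
        obtain ⟨hgS, hgT⟩ := Finset.mem_sdiff.1 hgS'
        apply hgT
        refine Finset.mem_filter.2 ⟨hgS, ?_⟩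
        have hzc : Conn E x z := mem_component.1 ((mem_compEdges.1 (hTC hfT)).2 hzf)
        exact edge_mem_compEdges (hSE hgS) hzc hzg
      have hunion : S.biUnion id = T.biUnion id ∪ S'.biUnion id := by
        ext z
        simp only [Finset.mem_biUnion, Finset.mem_union, id]
        constructor
        · rintro ⟨f, hf, hz⟩
          by_cases hfT : f ∈ T
          · exact Or.inl ⟨f, hfT, hz⟩
          · exact Or.inr ⟨f, Finset.mem_sdiff.2 ⟨hf, hfT⟩, hz⟩
        · rintro (⟨f, hf, hz⟩ | ⟨f, hf, hz⟩)
          · exact ⟨f, hTS hf, hz⟩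
          · exact ⟨f, (Finset.mem_sdiff.1 hf).1, hz⟩
      have hcards : (S.biUnion id).card = (T.biUnion id).card + (S'.biUnion id).card := by
        rw [hunion, Finset.card_union_of_disjoint hdisj]
      have hScard : S.card = T.card + S'.card := by
        rw [hS', Finset.card_sdiff_of_subset hTS]
        have := Finset.card_le_card hTS
        omega
      have h1 : ((s : ℤ) - 1) * S.card = ((s : ℤ) - 1) * T.card + ((s : ℤ) - 1) * S'.card := by
        rw [hScard]; push_cast; ring
      rw [h1, hcards]
      push_cast
      linarith

/-- Existence of a system of pairwise disjoint `(s-1)`-subsets, one per edge. -/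
lemma exists_transversal {E : Finset (Finset α)} {s : ℕ} (hE : ∀ e ∈ E, e.card = s)
    (hs : 0 < s)
    (hcomp : ∀ x : α,
      excess s (component Finset.univ E x) (compEdges Finset.univ E x) ≤ 0) :
    ∃ D : {e // e ∈ E} → Finset α, (∀ e, D e ⊆ e.1) ∧ (∀ e, (D e).card = s - 1) ∧
      ∀ e f, e ≠ f → Disjoint (D e) (D f) := by
  classical
  have hall : ∀ S : Finset ({e // e ∈ E} × Fin (s - 1)), S.card ≤ (S.biUnion (fun p => p.1.1)).card := by
    intro S
    set S1 := S.image Prod.fst with hS1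
    set T := S1.image Subtype.val with hTdef
    have hTE : T ⊆ E := by
      intro e he
      obtain ⟨e', _, rfl⟩ := Finset.mem_image.1 he
      exact e'.2
    have hT1 : T.card = S1.card := Finset.card_image_of_injective _ Subtype.val_injective
    have hScard : S.card ≤ S1.card * (s - 1) := by
      have hsub : S ⊆ S1 ×ˢ (Finset.univ : Finset (Fin (s - 1))) := by
        intro p hp
        exact Finset.mem_product.2 ⟨Finset.mem_image_of_mem _ hp, Finset.mem_univ _⟩
      calc S.card ≤ (S1 ×ˢ (Finset.univ : Finset (Fin (s - 1)))).card :=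
            Finset.card_le_card hsub
        _ = S1.card * (s - 1) := by rw [Finset.card_product]; simp
    have hbi : S.biUnion (fun p => p.1.1) = T.biUnion id := by
      ext z
      simp only [Finset.mem_biUnion, hTdef, hS1, Finset.mem_image, id]
      constructor
      · rintro ⟨p, hp, hz⟩
        exact ⟨p.1.1, ⟨p.1, ⟨p, hp, rfl⟩, rfl⟩, hz⟩
      · rintro ⟨e, ⟨e', ⟨p, hp, rfl⟩, rfl⟩, hz⟩
        exact ⟨p, hp, hz⟩
    have hmain := union_lower hE hs hcomp T hTE
    have hfin : (s - 1) * T.card ≤ (T.biUnion id).card := by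
      have hc : (((s - 1) * T.card : ℕ) : ℤ) = ((s : ℤ) - 1) * T.card := by
        push_cast [Nat.cast_sub hs]
        ring
      exact_mod_cast hc ▸ hmain
    rw [hbi]
    calc S.card ≤ S1.card * (s - 1) := hScard
      _ = (s - 1) * T.card := by rw [hT1]; ring
      _ ≤ (T.biUnion id).card := hfin
  obtain ⟨g, hginj, hgmem⟩ :=
  (Finset.all_card_le_biUnion_card_iff_exists_injective
    (fun p : {e // e ∈ E} × Fin (s - 1) => p.1.1)).1 hall
  refine ⟨fun e => Finset.univ.image (fun i : Fin (s - 1) => g (e, i)), ?_, ?_, ?_⟩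
  · intro e z hz
    obtain ⟨i, _, rfl⟩ := Finset.mem_image.1 hz
    exact hgmem (e, i)
  · intro e
    rw [Finset.card_image_of_injective _ (fun i j hij => by
      have := hginj hij; simpa using congrArg Prod.snd this)]
    simp
  · intro e f hef
    rw [Finset.disjoint_left]
    intro z hze hzf
    obtain ⟨i, _, rfl⟩ := Finset.mem_image.1 hze
    obtain ⟨j, _, hj⟩ := Finset.mem_image.1 hzf
    exact hef (congrArg Prod.fst (hginj hj)).symm

end Comb2
section Game
variable {V : Type*} [Fintype V] [DecidableEq V]

lemma breaker_pairing (m b : ℕ) (hm : 1 ≤ m) (hmb : m ≤ b)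
    (E : Finset (Finset V)) (D : {e // e ∈ E} → Finset V)
    (hDsub : ∀ e, D e ⊆ e.1) (hDcard : ∀ e, m + 1 ≤ (D e).card)
    (hDdisj : ∀ e f, e ≠ f → Disjoint (D e) (D f)) :
    BreakerWins m b E := by
  classical
  set n := Fintype.card V with hn
  let pick : Finset V → Finset V := fun t => if h : t.Nonempty then {h.choose} else ∅
  have pick_sub : ∀ t, pick t ⊆ t := by
    intro t z hz
    simp only [pick] at hz
    split at hz
    · next h => rw [Finset.mem_singleton] at hz; exact hz ▸ h.choose_spec
    · exact absurd hz (Finset.notMem_empty z)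
  have pick_card : ∀ t, (pick t).card ≤ 1 := by
    intro t; simp only [pick]; split <;> simp
  have pick_ne : ∀ t, t.Nonempty → (pick t).Nonempty := by
    intro t h
    simp only [pick, dif_pos h]
    exact Finset.singleton_nonempty _
  let F : Finset V → Finset V → Finset {e // e ∈ E} := fun M B =>
    E.attach.filter (fun e => (D e ∩ M).Nonempty ∧ D e ∩ B = ∅)
  let core : Finset V → Finset V → Finset V := fun M B =>
    (F M B).biUnion (fun e => pick (D e \ (M ∪ B)))
  have core_sub : ∀ M B, core M B ⊆ Finset.univ \ (M ∪ B) := by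
    intro M B z hz
    obtain ⟨e, _, hze⟩ := Finset.mem_biUnion.1 hz
    have h := pick_sub _ hze
    exact Finset.mem_sdiff.2 ⟨Finset.mem_univ _, (Finset.mem_sdiff.1 h).2⟩
  have hUcard : ∀ M B : Finset V, (Finset.univ \ (M ∪ B)).card = n - (M ∪ B).card := by
    intro M B
    rw [Finset.card_sdiff_of_subset (Finset.subset_univ _), Finset.card_univ]
  have hbs : ∀ M B : Finset V, ∃ T : Finset V, T ⊆ Finset.univ \ (M ∪ B) ∧
      T.card = min b (n - (M ∪ B).card) ∧
      ((core M B).card ≤ min b (n - (M ∪ B).card) → core M B ⊆ T) := by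
    intro M B
    by_cases h : (core M B).card ≤ min b (n - (M ∪ B).card)
    · obtain ⟨T, hT1, hT2, hT3⟩ := Finset.exists_subsuperset_card_eq (core_sub M B) h
        (by rw [hUcard]; exact min_le_right _ _)
      exact ⟨T, hT2, hT3, fun _ => hT1⟩
    · obtain ⟨T, hT1, hT2⟩ := Finset.exists_subset_card_eq
        (s := Finset.univ \ (M ∪ B)) (n := min b (n - (M ∪ B).card))
        (by rw [hUcard]; exact min_le_right _ _)
      exact ⟨T, hT1, hT2, fun hc => absurd hc h⟩
  let bs : Strategy V := fun M B => (hbs M B).choose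
  have bs_spec : ∀ M B : Finset V, bs M B ⊆ Finset.univ \ (M ∪ B) ∧
      (bs M B).card = min b (n - (M ∪ B).card) ∧
      ((core M B).card ≤ min b (n - (M ∪ B).card) → core M B ⊆ bs M B) :=
    fun M B => (hbs M B).choose_spec
  have bs_valid : ValidStrategy b bs := by
    intro M B
    obtain ⟨h1, h2, _⟩ := bs_spec M B
    refine ⟨?_, h2⟩
    rw [Finset.disjoint_left]
    intro a ha hab
    exact (Finset.mem_sdiff.1 (h1 ha)).2 hab
  refine ⟨bs, bs_valid, ?_⟩
  intro ms hms
  have inv : ∀ r : ℕ, Disjoint (play ms bs r).1 (play ms bs r).2 ∧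
      ∀ e : {e // e ∈ E}, (D e ∩ (play ms bs r).1).Nonempty →
        (D e ∩ (play ms bs r).2).Nonempty := by
    intro r
    induction r with
    | zero => simp [play]
    | succ r ih =>
      obtain ⟨ihd, ihe⟩ := ih
      set M := (play ms bs r).1 with hM
      set B := (play ms bs r).2 with hB
      set A := ms M B with hA
      obtain ⟨hAdisj, hAcard⟩ := hms M B
      set M' := M ∪ A with hM'
      have hp1 : (play ms bs (r + 1)).1 = M' := rfl
      have hp2 : (play ms bs (r + 1)).2 = B ∪ bs M' B := rfl
      have hAm : A.card ≤ m := by rw [hAcard]; exact min_le_left _ _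
      have hMempty : ∀ e : {e // e ∈ E}, D e ∩ B = ∅ → D e ∩ M = ∅ := by
        intro e hBe
        by_contra h
        obtain ⟨z, hz⟩ := ihe e (Finset.nonempty_iff_ne_empty.2 h)
        exact (Finset.eq_empty_iff_forall_notMem.1 hBe) z hz
      have hsubA : ∀ e : {e // e ∈ E}, D e ∩ B = ∅ → D e ∩ M' ⊆ A := by
        intro e hBe z hz
        obtain ⟨hzD, hzM'⟩ := Finset.mem_inter.1 hz
        rcases Finset.mem_union.1 hzM' with hzM | hzA
        · exact absurd (Finset.mem_inter.2 ⟨hzD, hzM⟩)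
            (by rw [hMempty e hBe]; exact Finset.notMem_empty z)
        · exact hzA
      have hFA : ∀ e ∈ F M' B, (D e ∩ A).Nonempty := by
        intro e he
        obtain ⟨hMne', hBe⟩ := (Finset.mem_filter.1 he).2
        obtain ⟨z, hz⟩ := hMne'
        exact ⟨z, Finset.mem_inter.2 ⟨(Finset.mem_inter.1 hz).1,
          hsubA e hBe hz⟩⟩
      have hFcard : (F M' B).card ≤ A.card := by
        calc (F M' B).card ≤ ((F M' B).biUnion (fun e => D e ∩ A)).card := by
              apply Finset.card_le_card_biUnion
              · intro e he f hf hef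
                exact (hDdisj e f hef).mono Finset.inter_subset_left
                  Finset.inter_subset_left
              · exact hFA
          _ ≤ A.card := Finset.card_le_card (by
              intro z hz
              obtain ⟨e, _, hze⟩ := Finset.mem_biUnion.1 hz
              exact (Finset.mem_inter.1 hze).2)
      have hcore_card : (core M' B).card ≤ min b (n - (M' ∪ B).card) := by
        refine le_min ?_ ?_
        · calc (core M' B).card
              ≤ ∑ e ∈ F M' B, (pick (D e \ (M' ∪ B))).card := Finset.card_biUnion_le
            _ ≤ ∑ _e ∈ F M' B, 1 := Finset.sum_le_sum fun e _ => pick_card _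
            _ = (F M' B).card := by simp
            _ ≤ A.card := hFcard
            _ ≤ m := hAm
            _ ≤ b := hmb
        · calc (core M' B).card ≤ (Finset.univ \ (M' ∪ B)).card :=
              Finset.card_le_card (core_sub _ _)
            _ = n - (M' ∪ B).card := hUcard _ _
      obtain ⟨hbs1, hbs2, hbs3⟩ := bs_spec M' B
      have hcore_bs : core M' B ⊆ bs M' B := hbs3 hcore_card
      constructor
      · rw [hp1, hp2]
        refine Finset.disjoint_union_right.2 ⟨?_, ?_⟩
        · exact Finset.disjoint_union_left.2 ⟨ihd, (Finset.disjoint_union_right.1 hAdisj).2⟩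
        · exact Finset.disjoint_left.2 fun a haM' habs =>
            (Finset.mem_sdiff.1 (hbs1 habs)).2 (Finset.mem_union_left _ haM')
      · intro e heM'
        rw [hp1] at heM'
        rw [hp2]
        by_cases hBe : (D e ∩ B).Nonempty
        · obtain ⟨z, hz⟩ := hBe
          exact ⟨z, Finset.mem_inter.2 ⟨(Finset.mem_inter.1 hz).1,
            Finset.mem_union_left _ (Finset.mem_inter.1 hz).2⟩⟩
        · have hBe' : D e ∩ B = ∅ := Finset.not_nonempty_iff_eq_empty.1 hBe
          have heF : e ∈ F M' B :=
            Finset.mem_filter.2 ⟨Finset.mem_attach _ _, heM', hBe'⟩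
          have hne' : (D e \ (M' ∪ B)).Nonempty := by
            have h1 : (D e ∩ M').card ≤ m :=
              le_trans (Finset.card_le_card (hsubA e hBe')) hAm
            have h2 : D e ∩ (M' ∪ B) = D e ∩ M' := by
              rw [Finset.inter_union_distrib_left, hBe', Finset.union_empty]
            have h3 := Finset.card_inter_add_card_sdiff (D e) (M' ∪ B)
            have h4 := hDcard e
            rw [h2] at h3
            rw [← Finset.card_pos]
            omega
          obtain ⟨z, hz⟩ := pick_ne _ hne'
          have hzbs : z ∈ bs M' B :=
            hcore_bs (Finset.mem_biUnion.2 ⟨e, heF, hz⟩)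
          have hzD : z ∈ D e := (Finset.mem_sdiff.1 (pick_sub _ hz)).1
          exact ⟨z, Finset.mem_inter.2 ⟨hzD, Finset.mem_union_right _ hzbs⟩⟩
  intro e he hsub
  obtain ⟨hdisj, hinv⟩ := inv n
  have hDne : (D ⟨e, he⟩).Nonempty :=
    Finset.card_pos.1 (lt_of_lt_of_le (by omega) (hDcard ⟨e, he⟩))
  have hDM : (D ⟨e, he⟩ ∩ (play ms bs n).1).Nonempty := by
    obtain ⟨z, hz⟩ := hDne
    exact ⟨z, Finset.mem_inter.2 ⟨hz, hsub (hDsub ⟨e, he⟩ hz)⟩⟩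
  obtain ⟨z, hz⟩ := hinv ⟨e, he⟩ hDM
  obtain ⟨hzD, hzB⟩ := Finset.mem_inter.1 hz
  exact Finset.disjoint_left.1 hdisj (hsub (hDsub ⟨e, he⟩ hzD)) hzB

end Game

/-- If `m ≤ s - 2` and `m ≤ b`, then Breaker wins the `(m,b)`-game on any
`s`-uniform board which is a disjoint collection of trees (connected components
of excess `-1`) and unicycles (connected components of excess `0`). -/
theorem stmt9 {V : Type*} [Fintype V] [DecidableEq V] (m b s : ℕ)
    (hm : 1 ≤ m) (hms : m ≤ s - 2) (hmb : m ≤ b)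
    (E : Finset (Finset V)) (hE : ∀ e ∈ E, e.card = s)
    (hcomp : ∀ x : V,
      excess s (component Finset.univ E x) (compEdges Finset.univ E x) = -1 ∨
      excess s (component Finset.univ E x) (compEdges Finset.univ E x) = 0) :
    BreakerWins m b E := by
  classical
  have hs : 0 < s := by omega
  have hcomp' : ∀ x : V,
      excess s (component Finset.univ E x) (compEdges Finset.univ E x) ≤ 0 := by
    intro x
    rcases hcomp x with h | h <;> simp [h]
  obtain ⟨D, hDsub, hDcard, hDdisj⟩ := exists_transversal hE hs hcomp'
  exact breaker_pairing m b hm hmb E D hDsub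
    (fun e => by rw [hDcard]; omega) hDdisj
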